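/- Let n ≥ 1 be an integer, λ ∈ (0,1), and κ ≥ 2 an even integer. The weight w = w_{λ,κ} is twice continuously differentiable on ℝⁿ and there exists a constant C = C(n,λ,κ) > 0 such that the operator norm of the second derivative (Hessian) satisfies ‖∇²w(x)‖ ≤ C · w(x) for all x ∈ ℝⁿ. -/

import Mathlib

open Real MeasureTheory

/-- The Muckenhoupt-type weight `w_{λ,κ}(x) = (1 + |x|^κ)^(−λ/κ)` on `ℝⁿ`. -/
noncomputable def weight (n : ℕ) (lam : ℝ) (kap : ℕ) (x : EuclideanSpace ℝ (Fin n)) : ℝ :=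
  (1 + ‖x‖ ^ kap) ^ (-(lam / (kap : ℝ)))

noncomputable def g1 (a : ℝ) (h : ℕ) (t : ℝ) : ℝ :=
  -a * ((1 + t ^ h) ^ (-a - 1) * ((h : ℝ) * t ^ (h - 1)))

noncomputable def g2 (a : ℝ) (h : ℕ) (t : ℝ) : ℝ :=
  -a * ((-a - 1) * (1 + t ^ h) ^ (-a - 1 - 1) * ((h : ℝ) * t ^ (h - 1)) * ((h : ℝ) * t ^ (h - 1))
    + (1 + t ^ h) ^ (-a - 1) * ((h : ℝ) * (((h - 1 : ℕ) : ℝ) * t ^ (h - 1 - 1))))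

lemma hasDerivAt_g (a : ℝ) (h : ℕ) (t : ℝ) (hs : 0 < 1 + t ^ h) :
    HasDerivAt (fun t : ℝ => (1 + t ^ h) ^ (-a)) (g1 a h t) t := by
  have hb : HasDerivAt (fun t : ℝ => 1 + t ^ h) ((h : ℝ) * t ^ (h - 1)) t :=
    (hasDerivAt_pow h t).const_add 1
  have ho : HasDerivAt (fun s : ℝ => s ^ (-a)) (-a * (1 + t ^ h) ^ (-a - 1)) (1 + t ^ h) :=
    Real.hasDerivAt_rpow_const (Or.inl hs.ne')
  have H := ho.comp t hb
  simp only [Function.comp_def] at H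
  refine H.congr_deriv ?_
  simp [g1]; ring

lemma hasDerivAt_g1 (a : ℝ) (h : ℕ) (t : ℝ) (hs : 0 < 1 + t ^ h) :
    HasDerivAt (g1 a h) (g2 a h t) t := by
  have hb : HasDerivAt (fun t : ℝ => 1 + t ^ h) ((h : ℝ) * t ^ (h - 1)) t :=
    (hasDerivAt_pow h t).const_add 1
  have hP : HasDerivAt (fun t : ℝ => (1 + t ^ h) ^ (-a - 1))
      ((-a - 1) * (1 + t ^ h) ^ (-a - 1 - 1) * ((h : ℝ) * t ^ (h - 1))) t := by
    have ho : HasDerivAt (fun s : ℝ => s ^ (-a - 1))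
        ((-a - 1) * (1 + t ^ h) ^ (-a - 1 - 1)) (1 + t ^ h) :=
      Real.hasDerivAt_rpow_const (Or.inl hs.ne')
    have H := ho.comp t hb
    simpa [Function.comp_def] using H
  have hQ : HasDerivAt (fun t : ℝ => (h : ℝ) * t ^ (h - 1))
      ((h : ℝ) * (((h - 1 : ℕ) : ℝ) * t ^ (h - 1 - 1))) t :=
    (hasDerivAt_pow (h - 1) t).const_mul _
  have H := (hP.mul hQ).const_mul (-a)
  exact H

lemma key1 {h : ℕ} (hh : 1 ≤ h) {t : ℝ} (ht : 0 ≤ t) : t ^ (h - 1) ≤ 1 + t ^ h := by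
  rcases le_total t 1 with h1 | h1
  · have h2 : t ^ (h - 1) ≤ 1 := pow_le_one₀ ht h1
    have h3 : (0:ℝ) ≤ t ^ h := pow_nonneg ht h
    linarith
  · have h2 : t ^ (h - 1) ≤ t ^ h := pow_le_pow_right₀ h1 (by omega)
    linarith

lemma key4 {h : ℕ} (hh : 1 ≤ h) {t : ℝ} (ht : 0 ≤ t) : t ^ (h - 1) * t ≤ 1 + t ^ h := by
  rw [← pow_succ, show h - 1 + 1 = h by omega]
  linarith

lemma key3 {h : ℕ} (hh : 1 ≤ h) {t : ℝ} (ht : 0 ≤ t) : t ^ (h - 1 - 1) * t ≤ 1 + t ^ h := by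
  rcases eq_or_lt_of_le hh with h1 | h1
  · simp [← h1]
  · rw [← pow_succ, show h - 1 - 1 + 1 = h - 1 by omega]
    exact key1 hh ht

lemma bound_g1 {a : ℝ} (ha : 0 < a) {h : ℕ} (hh : 1 ≤ h) {t : ℝ} (ht : 0 ≤ t) :
    |g1 a h t| ≤ a * h * (1 + t ^ h) ^ (-a) := by
  have hs : (0:ℝ) < 1 + t ^ h := by positivity
  have e1 : (1 + t ^ h) ^ (-a - 1) * (1 + t ^ h) = (1 + t ^ h) ^ (-a) := by
    rw [← Real.rpow_add_one hs.ne']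
    norm_num
  have habs : |g1 a h t| = a * ((1 + t ^ h) ^ (-a - 1) * ((h : ℝ) * t ^ (h - 1))) := by
    rw [g1, abs_mul, abs_neg, abs_of_pos ha, abs_of_nonneg (by positivity)]
  rw [habs]
  calc a * ((1 + t ^ h) ^ (-a - 1) * ((h : ℝ) * t ^ (h - 1)))
      ≤ a * ((1 + t ^ h) ^ (-a - 1) * ((h : ℝ) * (1 + t ^ h))) := by
        gcongr
        exact key1 hh ht
    _ = a * h * ((1 + t ^ h) ^ (-a - 1) * (1 + t ^ h)) := by ring
    _ = a * h * (1 + t ^ h) ^ (-a) := by rw [e1]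

lemma bound_g2 {a : ℝ} (ha : 0 < a) {h : ℕ} (hh : 1 ≤ h) {t : ℝ} (ht : 0 ≤ t) :
    |g2 a h t| * t ≤ a * ((a + 1) * (h : ℝ) * (h : ℝ) + (h : ℝ) * ((h - 1 : ℕ) : ℝ))
      * (1 + t ^ h) ^ (-a) := by
  have hs : (0:ℝ) < 1 + t ^ h := by positivity
  have e1 : (1 + t ^ h) ^ (-a - 1) * (1 + t ^ h) = (1 + t ^ h) ^ (-a) := by
    rw [← Real.rpow_add_one hs.ne']; norm_num
  have e2 : (1 + t ^ h) ^ (-a - 1 - 1) * ((1 + t ^ h) * (1 + t ^ h)) = (1 + t ^ h) ^ (-a) := by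
    rw [show (1 + t ^ h) ^ (-a-1-1) * ((1 + t ^ h) * (1 + t ^ h))
      = (1 + t ^ h) ^ (-a-1-1) * (1 + t ^ h) * (1 + t ^ h) from by ring,
      ← Real.rpow_add_one hs.ne', ← Real.rpow_add_one hs.ne']
    norm_num
  have hX2Q : (0:ℝ) ≤ (1 + t ^ h) ^ (-a-1-1) * (((h:ℝ) * t ^ (h-1)) * ((h:ℝ) * t ^ (h-1))) := by
    positivity
  have hX1R : (0:ℝ) ≤ (1 + t ^ h) ^ (-a-1) * ((h:ℝ) * (((h - 1 : ℕ):ℝ) * t ^ (h-1-1))) := by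
    positivity
  have hM : |g2 a h t| ≤ a * ((a + 1) * ((1 + t ^ h) ^ (-a-1-1))
      * (((h:ℝ) * t ^ (h-1)) * ((h:ℝ) * t ^ (h-1)))
      + (1 + t ^ h) ^ (-a-1) * ((h:ℝ) * (((h - 1 : ℕ):ℝ) * t ^ (h-1-1)))) := by
    rw [abs_le]
    constructor
    · rw [g2]
      nlinarith [mul_nonneg ha.le hX1R, mul_nonneg (mul_nonneg ha.le
        (by linarith : (0:ℝ) ≤ a + 1)) hX2Q]
    · rw [g2]
      nlinarith [mul_nonneg ha.le hX1R, mul_nonneg (mul_nonneg ha.le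
        (by linarith : (0:ℝ) ≤ a + 1)) hX2Q]
  calc |g2 a h t| * t
      ≤ (a * ((a + 1) * ((1 + t ^ h) ^ (-a-1-1))
        * (((h:ℝ) * t ^ (h-1)) * ((h:ℝ) * t ^ (h-1)))
        + (1 + t ^ h) ^ (-a-1) * ((h:ℝ) * (((h - 1 : ℕ):ℝ) * t ^ (h-1-1))))) * t :=
        mul_le_mul_of_nonneg_right hM ht
    _ = a * (a + 1) * ((h:ℝ) * (h:ℝ)) * ((1 + t ^ h) ^ (-a-1-1) * (t ^ (h-1) * (t ^ (h-1) * t)))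
        + a * (h:ℝ) * (((h - 1 : ℕ):ℝ)) * ((1 + t ^ h) ^ (-a-1) * (t ^ (h-1-1) * t)) := by
        ring
    _ ≤ a * (a + 1) * ((h:ℝ) * (h:ℝ)) * ((1 + t ^ h) ^ (-a-1-1) * ((1 + t ^ h) * (1 + t ^ h)))
        + a * (h:ℝ) * (((h - 1 : ℕ):ℝ)) * ((1 + t ^ h) ^ (-a-1) * (1 + t ^ h)) := by
        gcongr
        · exact key1 hh ht
        · exact key4 hh ht
        · exact key3 hh ht
    _ = a * ((a + 1) * (h : ℝ) * (h : ℝ) + (h : ℝ) * ((h - 1 : ℕ) : ℝ))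
        * (1 + t ^ h) ^ (-a) := by rw [e1, e2]; ring

noncomputable def innerL (n : ℕ) :
    EuclideanSpace ℝ (Fin n) →L[ℝ] (EuclideanSpace ℝ (Fin n) →L[ℝ] ℝ) :=
  innerSL ℝ

lemma innerL_apply {n : ℕ} (x : EuclideanSpace ℝ (Fin n)) : innerL n x = innerSL ℝ x := rfl

section steps
variable {n : ℕ}

lemma step1 (a : ℝ) (h : ℕ) (x : EuclideanSpace ℝ (Fin n)) :
    HasFDerivAt (fun y : EuclideanSpace ℝ (Fin n) => (1 + (‖y‖ ^ 2) ^ h) ^ (-a))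
      ((2 * g1 a h (‖x‖ ^ 2)) • innerSL ℝ x) x := by
  have hs : (0:ℝ) < 1 + (‖x‖ ^ 2) ^ h := by positivity
  have hnorm : HasFDerivAt (fun y : EuclideanSpace ℝ (Fin n) => ‖y‖ ^ 2)
      (2 • (innerSL ℝ x)) x := (hasStrictFDerivAt_norm_sq x).hasFDerivAt
  have hg := (hasDerivAt_g a h (‖x‖ ^ 2) hs).comp_hasFDerivAt x hnorm
  refine hg.congr_fderiv ?_
  ext u
  simp [smul_smul]
  ring

lemma step2c (a : ℝ) (h : ℕ) (x : EuclideanSpace ℝ (Fin n)) :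
    HasFDerivAt (fun y : EuclideanSpace ℝ (Fin n) => 2 * g1 a h (‖y‖ ^ 2))
      ((4 * g2 a h (‖x‖ ^ 2)) • innerSL ℝ x) x := by
  have hs : (0:ℝ) < 1 + (‖x‖ ^ 2) ^ h := by positivity
  have hnorm : HasFDerivAt (fun y : EuclideanSpace ℝ (Fin n) => ‖y‖ ^ 2)
      (2 • (innerSL ℝ x)) x := (hasStrictFDerivAt_norm_sq x).hasFDerivAt
  have hd : HasDerivAt (fun t : ℝ => 2 * g1 a h t) (2 * g2 a h (‖x‖ ^ 2)) (‖x‖ ^ 2) :=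
    (hasDerivAt_g1 a h (‖x‖ ^ 2) hs).const_mul 2
  have hg := hd.comp_hasFDerivAt x hnorm
  refine hg.congr_fderiv ?_
  ext u
  simp [smul_smul]
  ring

lemma step2c' (a : ℝ) (h : ℕ) (x : EuclideanSpace ℝ (Fin n)) :
    HasFDerivAt (fun y : EuclideanSpace ℝ (Fin n) => 2 * g1 a h (‖y‖ ^ 2))
      ((4 * g2 a h (‖x‖ ^ 2)) • innerL n x) x := step2c a h x

lemma step2 (a : ℝ) (h : ℕ) (x : EuclideanSpace ℝ (Fin n)) :
    HasFDerivAt (fun y : EuclideanSpace ℝ (Fin n) => (2 * g1 a h (‖y‖ ^ 2)) • innerL n y)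
      ((2 * g1 a h (‖x‖ ^ 2)) • innerL n
        + ((4 * g2 a h (‖x‖ ^ 2)) • innerL n x).smulRight (innerL n x)) x :=
  (step2c' a h x).smul (innerL n).hasFDerivAt

end steps

set_option maxHeartbeats 1000000 in
lemma hess_norm_bound {n : ℕ} (c d : ℝ) (x : EuclideanSpace ℝ (Fin n)) :
    ‖c • innerL n + (d • innerL n x).smulRight (innerL n x)‖ ≤ |c| + |d| * ‖x‖ ^ 2 := by
  have h1 : ‖c • innerL n‖ ≤ |c| := by
    calc ‖c • innerL n‖ ≤ ‖c‖ * ‖innerL n‖ := ContinuousLinearMap.opNorm_smul_le c (innerL n)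
      _ ≤ |c| * 1 := by
          rw [Real.norm_eq_abs]
          gcongr
          exact norm_innerSL_le ℝ
      _ = |c| := mul_one _
  have h2 : ‖(d • innerL n x).smulRight (innerL n x)‖ ≤ |d| * ‖x‖ ^ 2 := by
    rw [ContinuousLinearMap.norm_smulRight_apply]
    calc ‖d • innerL n x‖ * ‖innerL n x‖ ≤ (‖d‖ * ‖innerL n x‖) * ‖innerL n x‖ := by
          gcongr
          exact ContinuousLinearMap.opNorm_smul_le d (innerL n x)
      _ = |d| * ‖x‖ ^ 2 := by
          rw [innerL_apply, innerSL_apply_norm, Real.norm_eq_abs]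
          ring
  calc ‖c • innerL n + (d • innerL n x).smulRight (innerL n x)‖
      ≤ ‖c • innerL n‖ + ‖(d • innerL n x).smulRight (innerL n x)‖ :=
        ContinuousLinearMap.opNorm_add_le _ _
    _ ≤ |c| + |d| * ‖x‖ ^ 2 := add_le_add h1 h2

theorem stmt_5 (n : ℕ) (hn : 1 ≤ n) (lam : ℝ) (hlam : lam ∈ Set.Ioo (0 : ℝ) 1)
    (kap : ℕ) (hkap : 2 ≤ kap) (hke : Even kap) :
    ContDiff ℝ 2 (weight n lam kap) ∧
    ∃ C > 0, ∀ x : EuclideanSpace ℝ (Fin n),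
      ‖iteratedFDeriv ℝ 2 (weight n lam kap) x‖ ≤ C * weight n lam kap x := by
  obtain ⟨h, hk⟩ := hke
  have hh : 1 ≤ h := by omega
  set a := lam / (kap : ℝ) with ha_def
  have hkpos : (0:ℝ) < kap := by exact_mod_cast (by omega : 0 < kap)
  have ha : 0 < a := div_pos hlam.1 hkpos
  have hW : weight n lam kap
      = fun x : EuclideanSpace ℝ (Fin n) => (1 + (‖x‖ ^ 2) ^ h) ^ (-a) := by
    funext x
    rw [weight, show ‖x‖ ^ kap = (‖x‖ ^ 2) ^ h from by
      rw [show kap = 2 * h by omega, pow_mul], ← ha_def]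
  refine ⟨?_, ?_⟩
  · rw [hW]
    refine contDiff_iff_contDiffAt.2 fun x => ?_
    have hb : ContDiffAt ℝ 2 (fun y : EuclideanSpace ℝ (Fin n) => 1 + (‖y‖ ^ 2) ^ h) x :=
      (contDiff_const.add ((contDiff_norm_sq ℝ).pow h)).contDiffAt
    exact hb.rpow_const_of_ne (by positivity)
  · set C : ℝ := 2 * (a * h) + 4 * (a * ((a + 1) * (h:ℝ) * (h:ℝ) + (h:ℝ) * ((h - 1 : ℕ) : ℝ)))
      with hC_def
    have hhr : (0:ℝ) < h := by exact_mod_cast hh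
    have hC : 0 < C := by
      have t1 : (0:ℝ) < 2 * (a * h) := by positivity
      have t2 : (0:ℝ) ≤ 4 * (a * ((a + 1) * (h:ℝ) * (h:ℝ) + (h:ℝ) * ((h - 1 : ℕ) : ℝ))) := by
        positivity
      linarith
    refine ⟨C, hC, fun x => ?_⟩
    have hfd1 : fderiv ℝ (weight n lam kap)
        = fun y : EuclideanSpace ℝ (Fin n) => (2 * g1 a h (‖y‖ ^ 2)) • innerL n y := by
      funext y
      rw [hW]
      exact (step1 a h y).fderiv
    have hfd2 : fderiv ℝ (fderiv ℝ (weight n lam kap)) x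
        = (2 * g1 a h (‖x‖ ^ 2)) • innerL n
          + ((4 * g2 a h (‖x‖ ^ 2)) • innerL n x).smulRight (innerL n x) := by
      rw [hfd1]
      exact (step2 a h x).fderiv
    have e : ‖iteratedFDeriv ℝ 2 (weight n lam kap) x‖
        = ‖fderiv ℝ (fderiv ℝ (weight n lam kap)) x‖ := by
      rw [show (2:ℕ) = 1 + 1 from rfl, ← norm_iteratedFDeriv_fderiv,
        show (1:ℕ) = 0 + 1 from rfl, ← norm_iteratedFDeriv_fderiv, norm_iteratedFDeriv_zero]
    have ht : (0:ℝ) ≤ ‖x‖ ^ 2 := by positivity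
    have hb1 := bound_g1 ha hh ht
    have hb2 := bound_g2 ha hh ht
    have hwx : weight n lam kap x = (1 + (‖x‖ ^ 2) ^ h) ^ (-a) := by rw [hW]
    rw [e, hfd2, hwx]
    calc ‖(2 * g1 a h (‖x‖ ^ 2)) • innerL n
          + ((4 * g2 a h (‖x‖ ^ 2)) • innerL n x).smulRight (innerL n x)‖
        ≤ |2 * g1 a h (‖x‖ ^ 2)| + |4 * g2 a h (‖x‖ ^ 2)| * ‖x‖ ^ 2 :=
          hess_norm_bound _ _ x
      _ = 2 * |g1 a h (‖x‖ ^ 2)| + 4 * (|g2 a h (‖x‖ ^ 2)| * ‖x‖ ^ 2) := by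
          rw [abs_mul, abs_mul, abs_two, show |(4:ℝ)| = 4 from by norm_num]
          ring
      _ ≤ C * (1 + (‖x‖ ^ 2) ^ h) ^ (-a) := by
          rw [hC_def]
          nlinarith [hb1, hb2]
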